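/- Let q = 2^s for s ≥ 1. In 𝔽_2[x], the polynomial x^{q+1} + x + 1 divides x^{q^2+q+1} - 1, i.e., x^{q^2+q+1} ≡ 1 modulo x^{q+1} + x + 1. -/

import Mathlib

open Polynomial

theorem stmt_1 (s : ℕ) (hs : 1 ≤ s) (q : ℕ) (hq : q = 2 ^ s) :
    (X ^ (q + 1) + X + 1 : Polynomial (ZMod 2)) ∣ X ^ (q ^ 2 + q + 1) - 1 := by
  set f : Polynomial (ZMod 2) := X ^ (q + 1) + X + 1 with hfdef
  rw [← Ideal.mem_span_singleton, ← Ideal.Quotient.eq_zero_iff_mem]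
  set π := Ideal.Quotient.mk (Ideal.span {f}) with hπ
  have hf : π f = 0 := Ideal.Quotient.eq_zero_iff_mem.2 (Ideal.subset_span rfl)
  have h2 : (2 : Polynomial (ZMod 2)) = 0 := CharTwo.two_eq_zero
  have h20 : (2 : (Polynomial (ZMod 2)) ⧸ Ideal.span {f}) = 0 := by
    rw [← map_ofNat π 2, h2, map_zero]
  have hneg : ∀ a : (Polynomial (ZMod 2)) ⧸ Ideal.span {f}, -a = a := by
    intro a
    linear_combination (-a) * h20
  have hx : (π X) ^ (q + 1) = π X + 1 := by
    have h0 : (π X) ^ (q + 1) + π X + 1 = 0 := by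
      simpa [hfdef, map_add, map_pow, map_one] using hf
    linear_combination h0 - (π X + 1) * h20
  have hfrob : (X + 1 : Polynomial (ZMod 2)) ^ q = X ^ q + 1 := by
    subst hq
    simpa using add_pow_char_pow (X : Polynomial (ZMod 2)) 1 2 s
  have hfrob' : (π X + 1) ^ q = (π X) ^ q + 1 := by
    simpa [map_add, map_pow, map_one] using congrArg π hfrob
  have key : (π X) ^ (q ^ 2 + q + 1) = 1 := by
    have hexp : q ^ 2 + q + 1 = (q + 1) * q + 1 := by ring
    rw [hexp, pow_succ, pow_mul, hx, hfrob', add_mul, one_mul, ← pow_succ, hx]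
    linear_combination (π X) * h20
  have hmap : π (X ^ (q ^ 2 + q + 1) - 1) = (π X) ^ (q ^ 2 + q + 1) - 1 := by
    simp [map_sub, map_pow, map_one]
  rw [hmap, key, sub_self]
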